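/- Let V be holomorphic on an open subset of ℂ containing the real segment [−1,1], let −1 < β < β′ < 1 and δ₁ ∈ ℝ. There exist a₀ > 0 and C > 0 such that for every real a ≥ a₀ there is a unique b ∈ ℝ with Im ∫_{β}^{β′} √((a + i·b) − V(x) − i·δ₁) dx = 0, and this unique b satisfies |b − ( (Im ∫_{β}^{β′} V(x) dx)/(β′−β) + δ₁ )| ≤ C/a, where √ denotes the principal branch of the complex square root. -/

import Mathlib

private lemma stmt19_sq {z : ℂ} (hz : z ≠ 0) : (z ^ (1/2:ℂ))^2 = z := by
  rw [sq, ← Complex.cpow_add _ _ hz]; norm_num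

private lemma stmt19_repos {z : ℂ} (hz : 0 < z.re) : 0 < (z ^ (1/2:ℂ)).re := by
  have hz0 : z ≠ 0 := by intro h; simp [h] at hz
  rw [Complex.cpow_def_of_ne_zero hz0, Complex.exp_re]
  apply mul_pos (Real.exp_pos _)
  apply Real.cos_pos_of_mem_Ioo
  have harg : |Complex.arg z| < Real.pi / 2 := Complex.abs_arg_lt_pi_div_two_iff.2 (Or.inl hz)
  have h2 : (Complex.log z * (1/2 : ℂ)).im = Complex.arg z / 2 := by
    simp [Complex.mul_im, Complex.log_im]; ring
  rw [h2]
  constructor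
  · nlinarith [abs_lt.1 harg, Real.pi_pos]
  · nlinarith [abs_lt.1 harg, Real.pi_pos]

private lemma stmt19_sq_re {s : ℂ} : (s^2).re = s.re^2 - s.im^2 := by
  rw [sq]; simp [Complex.mul_re]; ring

private lemma stmt19_sq_im {s : ℂ} : (s^2).im = 2 * s.re * s.im := by
  rw [sq]; simp [Complex.mul_im]; ring

private lemma stmt19_alg (p₁ p₂ q₁ q₂ : ℝ) (hp1 : 0 < p₁) (hp2 : 0 < p₂)
    (heq : p₁^2 - q₁^2 = p₂^2 - q₂^2) (hlt : p₁*q₁ < p₂*q₂) : q₁ < q₂ := by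
  by_contra h
  push_neg at h
  rcases le_or_gt q₁ 0 with h1 | h1
  · have hq : q₁^2 ≤ q₂^2 := by nlinarith [mul_self_le_mul_self (neg_nonneg.2 h1) (neg_le_neg h)]
    have hp : p₁ ≤ p₂ := le_of_pow_le_pow_left₀ two_ne_zero hp2.le (by nlinarith)
    nlinarith [mul_le_mul_of_nonneg_left h hp2.le, mul_le_mul_of_nonpos_right hp h1]
  · rcases le_or_gt q₂ 0 with h2 | h2
    · nlinarith
    · have hq : q₂^2 ≤ q₁^2 := by nlinarith [mul_self_le_mul_self h2.le h]
      have hp : p₂ ≤ p₁ := le_of_pow_le_pow_left₀ two_ne_zero hp1.le (by nlinarith)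
      nlinarith [mul_le_mul_of_nonneg_left h hp2.le, mul_le_mul_of_nonneg_right hp h1.le]

private lemma stmt19_mono {z₁ z₂ : ℂ} (hre : z₁.re = z₂.re) (h0 : 0 < z₁.re)
    (him : z₁.im < z₂.im) : (z₁^(1/2:ℂ)).im < (z₂^(1/2:ℂ)).im := by
  have hz1 : z₁ ≠ 0 := by intro h; simp [h] at h0
  have hz2 : z₂ ≠ 0 := by
    intro h; rw [h] at hre; simp at hre; rw [hre] at h0; exact lt_irrefl _ h0
  have h02 : 0 < z₂.re := hre ▸ h0
  set s₁ := z₁ ^ (1/2:ℂ) with hs₁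
  set s₂ := z₂ ^ (1/2:ℂ) with hs₂
  have e1 : s₁^2 = z₁ := stmt19_sq hz1
  have e2 : s₂^2 = z₂ := stmt19_sq hz2
  have p1 : 0 < s₁.re := stmt19_repos h0
  have p2 : 0 < s₂.re := stmt19_repos h02
  have r1 : s₁.re^2 - s₁.im^2 = z₁.re := by rw [← stmt19_sq_re, e1]
  have r2 : s₂.re^2 - s₂.im^2 = z₂.re := by rw [← stmt19_sq_re, e2]
  have i1 : 2 * s₁.re * s₁.im = z₁.im := by rw [← stmt19_sq_im, e1]
  have i2 : 2 * s₂.re * s₂.im = z₂.im := by rw [← stmt19_sq_im, e2]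
  exact stmt19_alg s₁.re s₂.re s₁.im s₂.im p1 p2 (by rw [r1, r2, hre]) (by nlinarith)

private lemma stmt19_est (a M B : ℝ) (z : ℂ) (ha : 1 ≤ a) (hB : 1 ≤ B)
    (hre2 : a/2 ≤ z.re) (hreM : |z.re - a| ≤ M) (him : |z.im| ≤ B) :
    |(z^(1/2:ℂ)).im - z.im/(2*Real.sqrt a)| ≤ B*(M+B^2)/(a*Real.sqrt a) := by
  have ha0 : (0:ℝ) < a := by linarith
  have hzre : 0 < z.re := by linarith
  have hz0 : z ≠ 0 := by intro h; simp [h] at hzre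
  set st := Real.sqrt a with hstdef
  have hst2 : st^2 = a := Real.sq_sqrt ha0.le
  have hstpos : 0 < st := Real.sqrt_pos.2 ha0
  set s := z ^ (1/2:ℂ) with hs
  set p := s.re
  set q := s.im
  have e : s^2 = z := stmt19_sq hz0
  have hp : 0 < p := stmt19_repos hzre
  have r : p^2 - q^2 = z.re := by rw [← stmt19_sq_re, e]
  have i : 2 * p * q = z.im := by rw [← stmt19_sq_im, e]
  have hp2 : a/2 ≤ p^2 := by nlinarith [sq_nonneg q]
  have hst2p : st ≤ 2*p := by nlinarith
  have h1 : |q| * st ≤ B := by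
    have : 2*p*|q| = |z.im| := by rw [← i, abs_mul, abs_of_pos (by linarith : (0:ℝ) < 2*p)]
    nlinarith [abs_nonneg q]
  have hq2 : q^2 ≤ B^2 := by
    nlinarith [abs_nonneg q, sq_abs q, mul_le_mul h1 h1 (by positivity) (by linarith)]
  have h2 : |st - p| * st ≤ M + B^2 := by
    have hfac : |st - p| * (st + p) = |st^2 - p^2| := by
      rw [← abs_of_pos (by linarith : (0:ℝ) < st + p), ← abs_mul]
      ring_nf
    have hsp : |st^2 - p^2| ≤ M + B^2 := by
      have heq : st^2 - p^2 = (a - z.re) - q^2 := by rw [hst2]; linarith [r]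
      rw [heq]
      have h3 : |a - z.re| ≤ M := by rw [abs_sub_comm]; exact hreM
      calc |a - z.re - q^2| ≤ |a - z.re| + |q^2| := abs_sub _ _
        _ ≤ M + B^2 := by rw [abs_of_nonneg (sq_nonneg q)]; linarith
    nlinarith [abs_nonneg (st - p), mul_le_mul_of_nonneg_left hp.le (abs_nonneg (st-p))]
  have key : q - z.im/(2*st) = q * (st - p) / st := by
    rw [← i]; field_simp
  rw [key, abs_div, abs_mul, abs_of_pos hstpos, div_le_div_iff₀ hstpos (by positivity)]
  have h3 : |q| * st * (|st - p| * st) ≤ B * (M + B^2) :=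
    mul_le_mul h1 h2 (by positivity) (by linarith)
  have h4 : |q| * |st - p| * (a*st) = |q| * st * (|st - p| * st) * st := by
    rw [← hst2]; ring
  rw [h4]
  exact mul_le_mul_of_nonneg_right h3 hstpos.le

/-- curve asymptotics in the pseudo-spectrum section, middle curve
for a potential with two jumps: for `a` large, the equation
`Im ∫_β^{β′} √((a+ib) − V(x) − iδ₁) dx = 0` has a unique real solution `b`, and
`b = (Im ∫_β^{β′} V)/(β′−β) + δ₁ + O(1/a)`. -/
theorem stmt19 (V : ℂ → ℂ) (U : Set ℂ) (hU : IsOpen U)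
    (hUV : ∀ x ∈ Set.Icc (-1:ℝ) 1, (x : ℂ) ∈ U)
    (hV : DifferentiableOn ℂ V U)
    (β β' : ℝ) (hβ : -1 < β) (hββ' : β < β') (hβ' : β' < 1) (δ₁ : ℝ) :
    ∃ a₀ : ℝ, 0 < a₀ ∧ ∃ C : ℝ, 0 < C ∧
      ∀ a : ℝ, a₀ ≤ a →
        (∃! b : ℝ,
          (∫ x in β..β',
            ((a : ℂ) + (b : ℂ) * Complex.I - V (x : ℂ) - Complex.I * δ₁) ^ (1/2 : ℂ)).im
            = 0) ∧
        ∀ b : ℝ,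
          (∫ x in β..β',
            ((a : ℂ) + (b : ℂ) * Complex.I - V (x : ℂ) - Complex.I * δ₁) ^ (1/2 : ℂ)).im
            = 0 →
          |b - ((∫ x in β..β', V (x : ℂ)).im / (β' - β) + δ₁)| ≤ C / a := by
  have hβle : β ≤ β' := hββ'.le
  have hβpos : 0 < β' - β := by linarith
  have hne : β' - β ≠ 0 := ne_of_gt hβpos
  have hsub : Set.Icc β β' ⊆ Set.Icc (-1:ℝ) 1 := Set.Icc_subset_Icc (by linarith) (by linarith)
  -- continuous extension of V∘ofReal beyond [β,β']
  set W : ℝ → ℂ := fun x => V (((Set.projIcc β β' hβle x : ℝ) : ℂ)) with hWdef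
  have hVc : ContinuousOn V U := hV.continuousOn
  have hg : Continuous (fun x : ℝ => (((Set.projIcc β β' hβle x : ℝ)) : ℂ)) :=
    Complex.continuous_ofReal.comp (continuous_subtype_val.comp continuous_projIcc)
  have hWc : Continuous W :=
    hVc.comp_continuous hg (fun x => hUV _ (hsub (Set.projIcc β β' hβle x).2))
  have hWeq : ∀ x ∈ Set.uIcc β β', W x = V x := by
    intro x hx
    rw [Set.uIcc_of_le hβle] at hx
    simp [hWdef, Set.projIcc_of_mem hβle hx]
  -- bound on W
  obtain ⟨M₀, hM₀⟩ := (isCompact_Icc : IsCompact (Set.Icc β β')).exists_bound_of_continuousOn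
    hWc.continuousOn
  set M : ℝ := max M₀ 1 with hMdef
  have hM1 : (1:ℝ) ≤ M := le_max_right _ _
  have hMb : ∀ x : ℝ, ‖W x‖ ≤ M := by
    intro x
    have hmem : ((Set.projIcc β β' hβle x : ℝ)) ∈ Set.Icc β β' := (Set.projIcc β β' hβle x).2
    have heq : W ((Set.projIcc β β' hβle x : ℝ)) = W x := by
      simp only [hWdef, Set.projIcc_of_mem hβle hmem]
    calc ‖W x‖ = ‖W ((Set.projIcc β β' hβle x : ℝ))‖ := by rw [heq]
      _ ≤ M₀ := hM₀ _ hmem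
      _ ≤ M := le_max_left _ _
  have hMre : ∀ x : ℝ, |(W x).re| ≤ M := fun x =>
    (Complex.abs_re_le_norm (W x)).trans (hMb x)
  have hMim : ∀ x : ℝ, |(W x).im| ≤ M := fun x =>
    (Complex.abs_im_le_norm (W x)).trans (hMb x)
  -- constants
  set m : ℝ := (∫ x in β..β', V (x:ℂ)).im / (β' - β) + δ₁ with hmdef
  set B : ℝ := |m| + 1 + M + |δ₁| with hBdef
  have hB1 : (1:ℝ) ≤ B := by
    have := abs_nonneg m; have := abs_nonneg δ₁; simp only [hBdef]; linarith
  set K : ℝ := B * (M + B^2) with hKdef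
  have hK1 : (1:ℝ) ≤ K := by nlinarith
  set C : ℝ := 2*K + 1 with hCdef
  have hCpos : 0 < C := by linarith
  set a₀ : ℝ := 2*M + C + 2 with ha₀def
  refine ⟨a₀, by linarith, C, hCpos, ?_⟩
  intro a ha
  have ha1 : (1:ℝ) ≤ a := by simp only [ha₀def] at ha; linarith
  have ha0 : (0:ℝ) < a := by linarith
  have ha2M : 2*M ≤ a := by simp only [ha₀def] at ha; linarith
  have haC : C ≤ a := by simp only [ha₀def] at ha; linarith
  have hCa1 : C/a ≤ 1 := (div_le_one ha0).2 haC
  have hCa0 : 0 ≤ C/a := by positivity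
  set st := Real.sqrt a with hstdef
  have hstpos : 0 < st := Real.sqrt_pos.2 ha0
  -- the shifted potential
  set z : ℝ → ℝ → ℂ := fun b x => (a:ℂ) + (b:ℂ)*Complex.I - W x - Complex.I*(δ₁:ℂ) with hzdef
  have hzre : ∀ b x, (z b x).re = a - (W x).re := by intro b x; simp [hzdef]
  have hzim : ∀ b x, (z b x).im = b - (W x).im - δ₁ := by intro b x; simp [hzdef]
  have hrepos : ∀ b x, 0 < (z b x).re := by
    intro b x; rw [hzre]; have := abs_le.1 (hMre x); linarith
  have hrehalf : ∀ b x, a/2 ≤ (z b x).re := by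
    intro b x; rw [hzre]; have := abs_le.1 (hMre x); linarith
  have hreM : ∀ b x, |(z b x).re - a| ≤ M := by
    intro b x; rw [hzre]; rw [show a - (W x).re - a = -((W x).re) by ring, abs_neg]
    exact hMre x
  set g : ℝ → ℝ → ℝ := fun b x => ((z b x) ^ (1/2:ℂ)).im with hgdef
  -- continuity
  have hzc : Continuous (fun p : ℝ × ℝ => z p.1 p.2) := by
    apply Continuous.sub
    apply Continuous.sub
    · exact continuous_const.add ((Complex.continuous_ofReal.comp continuous_fst).mul
        continuous_const)
    · exact hWc.comp continuous_snd
    · exact continuous_const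
  have hcpow : ContinuousOn (fun w : ℂ => w ^ (1/2:ℂ)) Complex.slitPlane :=
    fun w hw => (continuousAt_cpow_const hw).continuousWithinAt
  have hgC : Continuous (Function.uncurry g) := by
    apply Complex.continuous_im.comp
    exact hcpow.comp_continuous hzc
      (fun p => Complex.mem_slitPlane_iff.2 (Or.inl (hrepos p.1 p.2)))
  have hgx : ∀ b, Continuous (g b) := by
    intro b
    have : (g b) = (Function.uncurry g) ∘ (fun x => (b, x)) := rfl
    rw [this]
    exact hgC.comp (continuous_const.prodMk continuous_id)
  have hzsc : ∀ b, Continuous (fun x => (z b x) ^ (1/2:ℂ)) := by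
    intro b
    exact (hcpow.comp_continuous (hzc.comp (continuous_const.prodMk continuous_id))
      (fun x => Complex.mem_slitPlane_iff.2 (Or.inl (hrepos b x))))
  set f : ℝ → ℝ := fun b => ∫ x in β..β', g b x with hfdef
  have hfc : Continuous f :=
    intervalIntegral.continuous_parametric_intervalIntegral_of_continuous' hgC β β'
  -- link with the statement
  have hlink : ∀ b : ℝ,
      (∫ x in β..β',
        ((a : ℂ) + (b : ℂ) * Complex.I - V (x : ℂ) - Complex.I * δ₁) ^ (1/2 : ℂ)).im = f b := by
    intro b
    have hcong : (∫ x in β..β',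
        ((a : ℂ) + (b : ℂ) * Complex.I - V (x : ℂ) - Complex.I * δ₁) ^ (1/2 : ℂ))
        = ∫ x in β..β', (z b x) ^ (1/2:ℂ) := by
      apply intervalIntegral.integral_congr
      intro x hx
      simp only [hzdef, hWeq x hx]
    rw [hcong]
    have hii : IntervalIntegrable (fun x => (z b x)^(1/2:ℂ)) MeasureTheory.volume β β' :=
      (hzsc b).intervalIntegrable _ _
    rw [intervalIntegral.integral_of_le hβle]
    rw [hfdef]
    simp only [hgdef]
    rw [intervalIntegral.integral_of_le hβle]
    rw [intervalIntegrable_iff_integrableOn_Ioc_of_le hβle] at hii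
    simpa using (ContinuousLinearMap.integral_comp_comm Complex.imCLM hii).symm
  -- integrability of g b
  have hgint : ∀ b, IntervalIntegrable (g b) MeasureTheory.volume β β' := fun b =>
    (hgx b).intervalIntegrable _ _
  -- strict monotonicity
  have hmono : StrictMono f := by
    intro b₁ b₂ hb
    have hdiff : f b₂ - f b₁ = ∫ x in β..β', (g b₂ x - g b₁ x) :=
      (intervalIntegral.integral_sub (hgint b₂) (hgint b₁)).symm
    have hptlt : ∀ x, g b₁ x < g b₂ x := by
      intro x
      apply stmt19_mono
      · rw [hzre, hzre]
      · exact hrepos b₁ x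
      · rw [hzim, hzim]; linarith
    have hpos : 0 < ∫ x in β..β', (g b₂ x - g b₁ x) := by
      apply intervalIntegral.integral_pos hββ'
      · exact ((hgx b₂).sub (hgx b₁)).continuousOn
      · intro x _; linarith [hptlt x]
      · exact ⟨β, Set.left_mem_Icc.2 hβle, by linarith [hptlt β]⟩
    linarith
  -- the quantitative estimate
  have hest : ∀ b : ℝ, |b - m| ≤ 1 →
      |f b - (β'-β)*(b-m)/(2*st)| ≤ (β'-β)*K/(a*st) := by
    intro b hbm
    have hbB : |b| ≤ |m| + 1 := by
      have := abs_sub_abs_le_abs_sub b m; linarith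
    have hBz : ∀ x : ℝ, |(z b x).im| ≤ B := by
      intro x
      rw [hzim]
      have h1 := abs_le.1 hbB
      have h2 := abs_le.1 (hMim x)
      have h4 : -|δ₁| ≤ δ₁ ∧ δ₁ ≤ |δ₁| := ⟨neg_abs_le δ₁, le_abs_self δ₁⟩
      rw [abs_le]
      constructor <;> simp only [hBdef] <;> linarith [h4.1, h4.2]
    have hptw : ∀ x : ℝ, |g b x - (z b x).im/(2*st)| ≤ K/(a*st) := by
      intro x
      exact stmt19_est a M B (z b x) ha1 hB1 (hrehalf b x) (hreM b x) (hBz x)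
    -- the explicit integral of the linear part
    have himc : Continuous (fun x => (z b x).im/(2*st)) := by
      have : Continuous (fun x : ℝ => (z b x).im) :=
        Complex.continuous_im.comp (hzc.comp (continuous_const.prodMk continuous_id))
      exact this.div_const _
    have hiint : IntervalIntegrable (fun x => (z b x).im/(2*st)) MeasureTheory.volume β β' :=
      himc.intervalIntegrable _ _
    have hWimint : IntervalIntegrable (fun x => (W x).im) MeasureTheory.volume β β' :=
      (Complex.continuous_im.comp hWc).intervalIntegrable _ _
    have hWimeq : (∫ x in β..β', (W x).im) = (∫ x in β..β', V (x:ℂ)).im := by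
      have hcong : (∫ x in β..β', W x) = ∫ x in β..β', V (x:ℂ) :=
        intervalIntegral.integral_congr (fun x hx => hWeq x hx)
      rw [← hcong, intervalIntegral.integral_of_le hβle, intervalIntegral.integral_of_le hβle]
      have hwi := hWc.intervalIntegrable (μ := MeasureTheory.volume) β β'
      rw [intervalIntegrable_iff_integrableOn_Ioc_of_le hβle] at hwi
      simpa using (ContinuousLinearMap.integral_comp_comm Complex.imCLM hwi)
    have hinteq : (∫ x in β..β', (z b x).im/(2*st)) = (β'-β)*(b-m)/(2*st) := by
      have e1 : (fun x : ℝ => (z b x).im/(2*st)) = fun x : ℝ => (b - (W x).im - δ₁)/(2*st) := by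
        funext x; rw [hzim]
      rw [e1]
      have e2 : (∫ x in β..β', (b - (W x).im - δ₁)/(2*st))
          = (∫ x in β..β', (b - (W x).im - δ₁))/(2*st) := by
        rw [intervalIntegral.integral_div]
      rw [e2]
      have e3 : (∫ x in β..β', (b - (W x).im - δ₁))
          = (b - δ₁)*(β'-β) - (∫ x in β..β', (W x).im) := by
        have : (fun x : ℝ => b - (W x).im - δ₁) = fun x : ℝ => (b - δ₁) - (W x).im := by
          funext x; ring
        rw [this, intervalIntegral.integral_sub (intervalIntegrable_const) hWimint,
          intervalIntegral.integral_const, smul_eq_mul]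
        ring
      rw [e3, hWimeq]
      simp only [hmdef]
      field_simp
      ring
    have hdiff : f b - (∫ x in β..β', (z b x).im/(2*st))
        = ∫ x in β..β', (g b x - (z b x).im/(2*st)) :=
      (intervalIntegral.integral_sub (hgint b) hiint).symm
    have hbnd : |∫ x in β..β', (g b x - (z b x).im/(2*st))| ≤ K/(a*st) * |β' - β| := by
      have := intervalIntegral.norm_integral_le_of_norm_le_const
        (f := fun x => g b x - (z b x).im/(2*st)) (C := K/(a*st)) (a := β) (b := β')
        (fun x _ => by rw [Real.norm_eq_abs]; exact hptw x)
      simpa [Real.norm_eq_abs] using this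
    rw [← hinteq, hdiff]
    calc |∫ x in β..β', (g b x - (z b x).im/(2*st))| ≤ K/(a*st) * |β' - β| := hbnd
      _ = (β'-β)*K/(a*st) := by rw [abs_of_pos hβpos]; ring
  -- signs at the endpoints
  have hbp : |(m + C/a) - m| ≤ 1 := by
    rw [show (m + C/a) - m = C/a by ring, abs_of_nonneg hCa0]; exact hCa1
  have hbm' : |(m - C/a) - m| ≤ 1 := by
    rw [show (m - C/a) - m = -(C/a) by ring, abs_neg, abs_of_nonneg hCa0]; exact hCa1
  have hfp : 0 < f (m + C/a) := by
    have h := abs_le.1 (hest (m + C/a) hbp)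
    have heq : (β'-β)*((m + C/a)-m)/(2*st) - (β'-β)*K/(a*st) = (β'-β)/(2*a*st) := by
      rw [show (m + C/a) - m = C/a by ring]
      simp only [hCdef]
      field_simp
      ring
    have hpos : 0 < (β'-β)/(2*a*st) := by positivity
    linarith [h.1]
  have hfm : f (m - C/a) < 0 := by
    have h := abs_le.1 (hest (m - C/a) hbm')
    have heq : (β'-β)*((m - C/a)-m)/(2*st) + (β'-β)*K/(a*st) = -((β'-β)/(2*a*st)) := by
      rw [show (m - C/a) - m = -(C/a) by ring]
      simp only [hCdef]
      field_simp
      ring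
    have hpos : 0 < (β'-β)/(2*a*st) := by positivity
    linarith [h.2]
  -- IVT
  have hble : m - C/a ≤ m + C/a := by linarith
  obtain ⟨bs, hbsmem, hbs⟩ : ∃ x ∈ Set.Icc (m - C/a) (m + C/a), f x = 0 :=
    intermediate_value_Icc hble hfc.continuousOn ⟨hfm.le, hfp.le⟩
  constructor
  · refine ⟨bs, (hlink bs).trans hbs, ?_⟩
    intro y hy
    have hy' : f y = 0 := (hlink y).symm.trans hy
    exact hmono.injective (hy'.trans hbs.symm)
  · intro b hb
    have hb' : f b = 0 := (hlink b).symm.trans hb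
    have hbbs : b = bs := hmono.injective (hb'.trans hbs.symm)
    subst hbbs
    exact abs_le.2 ⟨by linarith [hbsmem.1], by linarith [hbsmem.2]⟩
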